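/- Suppose the asymptotic exit-time value function $\mathcal{V}$ is continuous on $\partial\mathcal{T}$ and the turnpike condition (TPC) holds. Then $\mathrm{Dom}(\mathcal{V})$ is open, $\mathcal{V}$ is continuous on $\mathrm{Dom}(\mathcal{V})$, and $\lim_{x\to\bar x}\mathcal{V}(x)=+\infty$ for every $\bar x\in\partial\,\mathrm{Dom}(\mathcal{V})$. -/

import Mathlib

open MeasureTheory Filter Set Metric
open scoped ENNReal

noncomputable section

/-- State space `ℝⁿ`. -/
abbrev Pt (n : ℕ) := EuclideanSpace ℝ (Fin n)

/-- Control functions with values in `ℝᵐ`. -/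
abbrev Ctrl (m : ℕ) := ℝ → (Fin m → ℝ)

/-- The data of an exit-time optimal control problem: a compact control set
`A ⊆ ℝᵐ`, a closed target `𝒯 ⊆ ℝⁿ` with compact boundary, dynamics `f` and a
nonnegative Lagrangian `l` (continuous, locally Lipschitz in the state
uniformly in the control, `f` with linear growth), together with the
trajectory map `(x,α) ↦ y_x(·,α)` solving `ẏ = f(y,α)`, `y(0) = x`
(in integral form). -/
structure ExitSetting (n m : ℕ) where
  A : Set (Fin m → ℝ)
  hAcomp : IsCompact A
  hAne : A.Nonempty
  T : Set (Pt n)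
  hTclosed : IsClosed T
  hTbd : IsCompact (frontier T)
  f : Pt n → (Fin m → ℝ) → Pt n
  l : Pt n → (Fin m → ℝ) → ℝ
  hlnn : ∀ x a, 0 ≤ l x a
  hfcont : Continuous fun p : Pt n × (Fin m → ℝ) => f p.1 p.2
  hlcont : Continuous fun p : Pt n × (Fin m → ℝ) => l p.1 p.2
  hgrowth : ∃ M > 0, ∀ x, ∀ a ∈ A, ‖f x a‖ ≤ M * (1 + ‖x‖)
  hfLip : ∀ R > 0, ∃ L > 0, ∀ a ∈ A,
    LipschitzOnWith (Real.toNNReal L) (fun x => f x a) (Metric.closedBall 0 R)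
  hlLip : ∀ R > 0, ∃ L > 0, ∀ a ∈ A,
    LipschitzOnWith (Real.toNNReal L) (fun x => l x a) (Metric.closedBall 0 R)
  traj : Pt n → Ctrl m → ℝ → Pt n
  htraj0 : ∀ x α, traj x α 0 = x
  htrajODE : ∀ x α t, 0 ≤ t →
    traj x α t = x + ∫ s in (0:ℝ)..t, f (traj x α s) (α s)

namespace ExitSetting

variable {n m : ℕ} (S : ExitSetting n m)

/-- Admissible (measurable, `A`-valued) controls. -/
def Adm (α : Ctrl m) : Prop := Measurable α ∧ ∀ t, α t ∈ S.A

/-- First entry time into a set `K` (`+∞` if the trajectory never enters). -/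
def exitTimeTo (K : Set (Pt n)) (x : Pt n) (α : Ctrl m) : ℝ≥0∞ :=
  ⨅ t : {t : ℝ // 0 ≤ t ∧ S.traj x α t ∈ K}, ENNReal.ofReal t.1

/-- First entry time into the target `𝒯`. -/
def exitTime (x : Pt n) (α : Ctrl m) : ℝ≥0∞ := S.exitTimeTo S.T x α

/-- Cost `∫₀^{t_x(α)} l(y_x(t,α),α(t)) dt` of a trajectory up to its entry time
into `K`. -/
def costTo (K : Set (Pt n)) (x : Pt n) (α : Ctrl m) : ℝ≥0∞ :=
  ∫⁻ t in {t : ℝ | 0 ≤ t ∧ ENNReal.ofReal t < S.exitTimeTo K x α},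
    ENNReal.ofReal (S.l (S.traj x α t) (α t))

/-- Cost up to the entry time into the target. -/
def cost (x : Pt n) (α : Ctrl m) : ℝ≥0∞ := S.costTo S.T x α

/-- Asymptotically admissible controls at `x`: the trajectory either reaches
the target in finite time or accumulates on it as `t → +∞`
(`liminf_{t → t_x(α)⁻} dist(y_x(t,α),𝒯) = 0`). -/
def AsympAdm (x : Pt n) (α : Ctrl m) : Prop :=
  S.Adm α ∧ (S.exitTime x α < ⊤ ∨
    liminf (fun t => infDist (S.traj x α t) S.T) atTop = 0)

/-- Asymptotic exit-time value function `𝒱`. -/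
def V (x : Pt n) : ℝ≥0∞ := ⨅ α ∈ {α | S.AsympAdm x α}, S.cost x α

/-- Finite-time exit value function `𝒱^f`. -/
def Vf (x : Pt n) : ℝ≥0∞ :=
  ⨅ α ∈ {α | S.Adm α ∧ S.exitTime x α < ⊤}, S.cost x α

/-- Unrestricted (minimal) value function `𝒱ᵐ`. -/
def Vm (x : Pt n) : ℝ≥0∞ := ⨅ α ∈ {α | S.Adm α}, S.cost x α

/-- Total `ρ`-cost of a trajectory up to its entry time into the target. -/
def rhoCost (ρ : Pt n → (Fin m → ℝ) → ℝ) (x : Pt n) (α : Ctrl m) : ℝ≥0∞ :=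
  ∫⁻ t in {t : ℝ | 0 ≤ t ∧ ENNReal.ofReal t < S.exitTime x α},
    ENNReal.ofReal (ρ (S.traj x α t) (α t))

/-- Penalized value function `𝒰^ρ`: infimum of the cost over asymptotically
admissible controls with finite total `ρ`-cost. -/
def Urho (ρ : Pt n → (Fin m → ℝ) → ℝ) (x : Pt n) : ℝ≥0∞ :=
  ⨅ α ∈ {α | S.AsympAdm x α ∧ S.rhoCost ρ x α < ⊤}, S.cost x α

/-- `ε`-penalized value function `𝒱^ρ_ε`, with running cost `l + ε ρ`. -/
def Veps (ρ : Pt n → (Fin m → ℝ) → ℝ) (ε : ℝ) (x : Pt n) : ℝ≥0∞ :=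
  ⨅ α ∈ {α | S.AsympAdm x α},
    (S.cost x α + ENNReal.ofReal ε * S.rhoCost ρ x α)

end ExitSetting


theorem gronwall_int {φ : ℝ → ℝ} {τ a L : ℝ} (ha : 0 ≤ a) (hL : 0 ≤ L)
    (hc : ContinuousOn φ (Icc 0 τ)) (hnn : ∀ t ∈ Icc 0 τ, 0 ≤ φ t)
    (hineq : ∀ t ∈ Icc 0 τ, φ t ≤ a + L * ∫ s in (0:ℝ)..t, φ s) :
    ∀ t ∈ Icc 0 τ, φ t ≤ a * Real.exp (L * t) := by
  rcases eq_or_lt_of_le hL with hL0 | hLpos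
  · intro t ht
    have h := hineq t ht
    rw [← hL0] at h ⊢
    have : (1:ℝ) ≤ Real.exp (0 * t) := by simp
    nlinarith
  intro t ht
  set F : ℝ → ℝ := fun u => ∫ s in (0:ℝ)..u, φ s with hFdef
  have hsub : Icc (0:ℝ) t ⊆ Icc 0 τ := Icc_subset_Icc le_rfl ht.2
  have hint : ∀ u ∈ Icc 0 τ, IntervalIntegrable φ volume 0 u := by
    intro u hu
    apply (hc.mono _).intervalIntegrable
    rw [uIcc_of_le hu.1]; exact Icc_subset_Icc le_rfl hu.2
  have hFc : ContinuousOn F (Icc 0 t) := by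
    have h2 : IntegrableOn φ (uIcc 0 t) volume := by
      rw [uIcc_of_le ht.1]
      exact (hc.mono hsub).integrableOn_compact isCompact_Icc
    simpa [uIcc_of_le ht.1] using intervalIntegral.continuousOn_primitive_interval h2
  have hFnn : ∀ u ∈ Icc 0 t, 0 ≤ F u := by
    intro u hu
    apply intervalIntegral.integral_nonneg hu.1
    intro s hs; exact hnn s (hsub ⟨hs.1, hs.2.trans hu.2⟩)
  have hFd : ∀ u ∈ Ico 0 t, HasDerivWithinAt F (φ u) (Ici u) u := by
    intro u hu
    have hu' : u ∈ Icc 0 τ := hsub ⟨hu.1, hu.2.le⟩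
    have hmem : Icc (0:ℝ) τ ∈ nhdsWithin u (Ioi u) := by
      apply mem_nhdsWithin.mpr
      refine ⟨Iio τ, isOpen_Iio, lt_of_lt_of_le hu.2 ht.2, ?_⟩
      rintro s ⟨hs1, hs2⟩
      exact ⟨hu.1.trans (le_of_lt hs2), le_of_lt hs1⟩
    apply intervalIntegral.integral_hasDerivWithinAt_right (hint u hu')
    · exact ⟨Icc 0 τ, hmem, hc.aestronglyMeasurable measurableSet_Icc⟩
    · exact (hc u hu').mono_of_mem_nhdsWithin hmem
  have key : ∀ u ∈ Icc 0 t, ‖F u‖ ≤ gronwallBound 0 L a (u - 0) := by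
    apply norm_le_gronwallBound_of_norm_deriv_right_le hFc hFd
    · simp [hFdef]
    · intro u hu
      have hu' : u ∈ Icc 0 t := ⟨hu.1, hu.2.le⟩
      have h1 : ‖φ u‖ = φ u := Real.norm_of_nonneg (hnn u (hsub hu'))
      have h2 : ‖F u‖ = F u := Real.norm_of_nonneg (hFnn u hu')
      rw [h1, h2]
      have := hineq u (hsub hu')
      linarith
  have hFt : F t ≤ gronwallBound 0 L a t := by
    have := key t ⟨ht.1, le_rfl⟩
    rw [Real.norm_of_nonneg (hFnn t ⟨ht.1, le_rfl⟩)] at this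
    simpa using this
  have hgb : gronwallBound 0 L a t = a / L * (Real.exp (L * t) - 1) := by
    rw [gronwallBound_of_K_ne_0 (ne_of_gt hLpos)]; ring
  have := hineq t ht
  have hLt : L * F t ≤ L * (a / L * (Real.exp (L * t) - 1)) :=
    mul_le_mul_of_nonneg_left (hFt.trans_eq hgb) hL
  have hcalc : a + L * (a / L * (Real.exp (L * t) - 1)) = a * Real.exp (L * t) := by
    field_simp; ring
  linarith
namespace ExitSetting

variable {n m : ℕ} (S : ExitSetting n m)

/-- The vector field along a trajectory. -/
def vf (x : Pt n) (α : Ctrl m) : ℝ → Pt n := fun s => S.f (S.traj x α s) (α s)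

theorem integrable_traj {α : Ctrl m} (hα : S.Adm α) (x : Pt n) {T₀ : ℝ} (hT : 0 ≤ T₀) :
    IntervalIntegrable (S.vf x α) volume 0 T₀ := by
  obtain ⟨M, hM, hMg⟩ := S.hgrowth
  set g : ℝ → Pt n := S.vf x α with hgdef
  by_contra hcon
  set I : Set ℝ := {t | t ∈ Icc (0:ℝ) T₀ ∧ IntervalIntegrable g volume 0 t} with hIdef
  have h00 : IntervalIntegrable g volume 0 0 := by
    rw [intervalIntegrable_iff]; simp
  have h0I : (0:ℝ) ∈ I := ⟨⟨le_rfl, hT⟩, h00⟩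
  have hne : I.Nonempty := ⟨0, h0I⟩
  have hbdd : BddAbove I := ⟨T₀, fun t ht => ht.1.2⟩
  set c := sSup I with hcdef
  have hc0 : 0 ≤ c := le_csSup hbdd h0I
  have hcT : c ≤ T₀ := csSup_le hne (fun t ht => ht.1.2)
  have hmono : ∀ t, 0 ≤ t → ∀ t' ∈ I, t ≤ t' → IntervalIntegrable g volume 0 t := by
    intro t ht t' ht' htt'
    refine ht'.2.mono_set ?_
    rw [uIcc_of_le ht, uIcc_of_le (ht.trans htt')]
    exact Icc_subset_Icc le_rfl htt'
  have hIco : ∀ t ∈ Ico 0 c, IntervalIntegrable g volume 0 t := by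
    intro t ht
    obtain ⟨t', ht'I, htt'⟩ := exists_lt_of_lt_csSup hne ht.2
    exact hmono t ht.1 t' ht'I htt'.le
  -- the trajectory equals `x` beyond `c`
  have hafter : ∀ t ∈ Ioc c T₀, S.traj x α t = x := by
    intro t ht
    have htI : t ∉ I := fun h => absurd (le_csSup hbdd h) (not_le.mpr ht.1)
    have hni : ¬ IntervalIntegrable g volume 0 t :=
      fun h => htI ⟨⟨hc0.trans ht.1.le, ht.2⟩, h⟩
    have heq : S.traj x α t = x + ∫ s in (0:ℝ)..t, g s := S.htrajODE x α t (hc0.trans ht.1.le)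
    rw [intervalIntegral.integral_undef hni] at heq
    simpa using heq
  -- uniform bound for the trajectory on `[0, c)`
  have hbound : ∀ b ∈ Ico (0:ℝ) c,
      ‖S.traj x α b - x‖ ≤ M * (1 + ‖x‖) * T₀ * Real.exp (M * T₀) := by
    intro b hb
    have hib : IntervalIntegrable g volume 0 b := hIco b hb
    set h : ℝ → Pt n := fun u => ∫ s in (0:ℝ)..u, g s with hhdef
    have hhc : ContinuousOn h (Icc 0 b) := by
      have := intervalIntegral.continuousOn_primitive_interval' hib left_mem_uIcc
      rwa [uIcc_of_le hb.1] at this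
    have htraj_eq : ∀ u ∈ Icc (0:ℝ) b, S.traj x α u = x + h u :=
      fun u hu => S.htrajODE x α u hu.1
    set φ : ℝ → ℝ := fun u => ‖h u‖ with hφdef
    have hφc : ContinuousOn φ (Icc 0 b) := hhc.norm
    have hφnn : ∀ u ∈ Icc (0:ℝ) b, 0 ≤ φ u := fun u _ => norm_nonneg _
    have hMx : 0 ≤ M * (1 + ‖x‖) := by positivity
    have hφineq : ∀ u ∈ Icc (0:ℝ) b,
        φ u ≤ M * (1 + ‖x‖) * T₀ + M * ∫ s in (0:ℝ)..u, φ s := by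
      intro u hu
      have hiu : IntervalIntegrable g volume 0 u := by
        refine hib.mono_set ?_
        rw [uIcc_of_le hu.1, uIcc_of_le hb.1]; exact Icc_subset_Icc le_rfl hu.2
      have h1 : φ u ≤ ∫ s in (0:ℝ)..u, ‖g s‖ := by
        simpa [hφdef, hhdef] using intervalIntegral.norm_integral_le_integral_norm (f := g) hu.1
      have h2 : ∀ s ∈ Icc (0:ℝ) u, ‖g s‖ ≤ M * (1 + ‖x‖) + M * φ s := by
        intro s hs
        have hse : S.traj x α s = x + h s := htraj_eq s ⟨hs.1, hs.2.trans hu.2⟩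
        have hg1 : ‖g s‖ ≤ M * (1 + ‖S.traj x α s‖) := hMg _ _ (hα.2 s)
        have hg2 : ‖S.traj x α s‖ ≤ ‖x‖ + φ s := by
          rw [hse]; exact norm_add_le _ _
        calc ‖g s‖ ≤ M * (1 + (‖x‖ + φ s)) := hg1.trans (by nlinarith)
          _ = M * (1 + ‖x‖) + M * φ s := by ring
      have h3 : ∫ s in (0:ℝ)..u, ‖g s‖ ≤ ∫ s in (0:ℝ)..u, (M * (1 + ‖x‖) + M * φ s) := by
        apply intervalIntegral.integral_mono_on hu.1 hiu.norm
        · exact (intervalIntegrable_const).add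
            (((hφc.mono (Icc_subset_Icc le_rfl hu.2)).intervalIntegrable_of_Icc hu.1).const_mul M)
        · exact h2
      have h4 : ∫ s in (0:ℝ)..u, (M * (1 + ‖x‖) + M * φ s)
          = M * (1 + ‖x‖) * u + M * ∫ s in (0:ℝ)..u, φ s := by
        rw [intervalIntegral.integral_add intervalIntegrable_const
          (((hφc.mono (Icc_subset_Icc le_rfl hu.2)).intervalIntegrable_of_Icc hu.1).const_mul M),
          intervalIntegral.integral_const, intervalIntegral.integral_const_mul]
        simp [smul_eq_mul]; ring
      have hu1 : M * (1 + ‖x‖) * u ≤ M * (1 + ‖x‖) * T₀ :=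
        mul_le_mul_of_nonneg_left (hu.2.trans (hb.2.le.trans hcT)) hMx
      linarith [h1.trans (h3.trans_eq h4)]
    have := gronwall_int (by positivity) hM.le hφc hφnn hφineq b ⟨hb.1, le_rfl⟩
    have hexp : Real.exp (M * b) ≤ Real.exp (M * T₀) :=
      Real.exp_le_exp.mpr (mul_le_mul_of_nonneg_left (hb.2.le.trans hcT) hM.le)
    have hfin : ‖S.traj x α b - x‖ = φ b := by
      rw [htraj_eq b ⟨hb.1, le_rfl⟩]; simp [hφdef]
    rw [hfin]
    calc φ b ≤ M * (1 + ‖x‖) * T₀ * Real.exp (M * b) := this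
      _ ≤ M * (1 + ‖x‖) * T₀ * Real.exp (M * T₀) := by
          have : 0 ≤ M * (1 + ‖x‖) * T₀ := by positivity
          exact mul_le_mul_of_nonneg_left hexp this
  -- continuity of the trajectory on `[0, c)`
  have htc : ContinuousOn (S.traj x α) (Ico 0 c) := by
    intro u hu
    obtain ⟨b, hub, hbc⟩ := exists_between hu.2
    have hib : IntervalIntegrable g volume 0 b := hIco b ⟨hu.1.trans hub.le, hbc⟩
    have hhc : ContinuousOn (fun u => x + ∫ s in (0:ℝ)..u, g s) (Icc 0 b) := by
      apply continuousOn_const.add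
      have := intervalIntegral.continuousOn_primitive_interval' hib left_mem_uIcc
      rwa [uIcc_of_le (hu.1.trans hub.le)] at this
    have heq : ∀ v ∈ Icc (0:ℝ) b, S.traj x α v = x + ∫ s in (0:ℝ)..v, g s :=
      fun v hv => S.htrajODE x α v hv.1
    have := (hhc.congr heq) u ⟨hu.1, hub.le⟩
    apply this.mono_of_mem_nhdsWithin
    apply mem_nhdsWithin.mpr
    exact ⟨Iio b, isOpen_Iio, hub, fun s hs => ⟨hs.2.1, hs.1.le⟩⟩
  -- integrability on `[0, c]`
  have hcI : IntervalIntegrable g volume 0 c := by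
    have hmeas : AEStronglyMeasurable g (volume.restrict (Ico 0 c)) := by
      have h1 : AEMeasurable (S.traj x α) (volume.restrict (Ico 0 c)) :=
        htc.aemeasurable measurableSet_Ico
      have h2 : AEMeasurable (fun s => (S.traj x α s, α s)) (volume.restrict (Ico 0 c)) :=
        h1.prodMk hα.1.aemeasurable
      exact (S.hfcont.measurable.comp_aemeasurable h2).aestronglyMeasurable
    have hb : IntegrableOn g (Ico 0 c) volume := by
      refine Integrable.mono' (g := fun _ => M * (1 + (‖x‖ + M * (1 + ‖x‖) * T₀ * Real.exp (M * T₀))))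
        ?_ hmeas ?_
      · exact (integrableOn_const_iff (by finiteness)).mpr (Or.inr (by simp [Real.volume_Ico]))
      · filter_upwards [ae_restrict_mem measurableSet_Ico] with s hs
        have hg1 : ‖g s‖ ≤ M * (1 + ‖S.traj x α s‖) := hMg _ _ (hα.2 s)
        have hg2 : ‖S.traj x α s‖ ≤ ‖x‖ + M * (1 + ‖x‖) * T₀ * Real.exp (M * T₀) := by
          calc ‖S.traj x α s‖ = ‖x + (S.traj x α s - x)‖ := by rw [show x + (S.traj x α s - x) = S.traj x α s by abel]
            _ ≤ ‖x‖ + ‖S.traj x α s - x‖ := norm_add_le _ _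
            _ ≤ _ := by linarith [hbound s hs]
        calc ‖g s‖ ≤ M * (1 + ‖S.traj x α s‖) := hg1
          _ ≤ _ := by nlinarith
    rw [intervalIntegrable_iff, uIoc_of_le hc0]
    refine (hb.union ((integrableOn_singleton_iff (x := c)).mpr (Or.inr (by simp)))).mono_set ?_
    intro s hs
    rcases eq_or_lt_of_le hs.2 with h | h
    · exact Or.inr (by simp [h])
    · exact Or.inl ⟨hs.1.le, h⟩
  -- conclusion
  rcases eq_or_lt_of_le hcT with hceq | hclt
  · exact hcon (hceq ▸ hcI)
  · have htail : IntegrableOn g (Ioc c T₀) volume := by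
      have heq : EqOn g (fun s => S.f x (α s)) (Ioc c T₀) := by
        intro s hs; simp only [hgdef, vf, hafter s hs]
      have hint : IntegrableOn (fun s => S.f x (α s)) (Ioc c T₀) volume := by
        refine Integrable.mono' (g := fun _ => M * (1 + ‖x‖))
          ((integrableOn_const_iff (by finiteness)).mpr (Or.inr (by simp [Real.volume_Ioc])))
          ?_ ?_
        · exact ((S.hfcont.measurable.comp (measurable_const.prodMk measurable_id)).comp
            hα.1).aestronglyMeasurable
        · filter_upwards with s
          exact hMg x (α s) (hα.2 s)
      exact hint.congr_fun heq.symm measurableSet_Ioc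
    have : IntervalIntegrable g volume c T₀ := by
      rw [intervalIntegrable_iff, uIoc_of_le hclt.le]; exact htail
    exact hcon (hcI.trans this)


theorem contOn_traj {α : Ctrl m} (hα : S.Adm α) (x : Pt n) :
    ContinuousOn (S.traj x α) (Ici 0) := by
  intro u hu
  have hu0 : (0:ℝ) ≤ u := hu
  have hib : IntervalIntegrable (S.vf x α) volume 0 (u + 1) :=
    S.integrable_traj hα x (by linarith)
  have hhc : ContinuousOn (fun v => x + ∫ s in (0:ℝ)..v, S.vf x α s) (Icc 0 (u+1)) := by
    apply continuousOn_const.add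
    have := intervalIntegral.continuousOn_primitive_interval' hib left_mem_uIcc
    rwa [uIcc_of_le (by linarith : (0:ℝ) ≤ u + 1)] at this
  have heq : ∀ v ∈ Icc (0:ℝ) (u+1), S.traj x α v = x + ∫ s in (0:ℝ)..v, S.vf x α s :=
    fun v hv => S.htrajODE x α v hv.1
  have := (hhc.congr heq) u ⟨hu0, by linarith⟩
  apply this.mono_of_mem_nhdsWithin
  apply mem_nhdsWithin.mpr
  exact ⟨Iio (u+1), isOpen_Iio, mem_Iio.mpr (by linarith), fun s hs => ⟨hs.2, hs.1.le⟩⟩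

theorem norm_traj_le {α : Ctrl m} (hα : S.Adm α) (x : Pt n) {τ M : ℝ} (hτ : 0 ≤ τ)
    (hM : 0 < M) (hMg : ∀ z, ∀ a ∈ S.A, ‖S.f z a‖ ≤ M * (1 + ‖z‖)) :
    ∀ t ∈ Icc (0:ℝ) τ, ‖S.traj x α t - x‖ ≤ M * (1 + ‖x‖) * τ * Real.exp (M * τ) := by
  set g : ℝ → Pt n := S.vf x α with hgdef
  set h : ℝ → Pt n := fun u => ∫ s in (0:ℝ)..u, g s with hhdef
  have hib : IntervalIntegrable g volume 0 τ := S.integrable_traj hα x hτ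
  have hhc : ContinuousOn h (Icc 0 τ) := by
    have := intervalIntegral.continuousOn_primitive_interval' hib left_mem_uIcc
    rwa [uIcc_of_le hτ] at this
  have htraj_eq : ∀ u ∈ Icc (0:ℝ) τ, S.traj x α u = x + h u :=
    fun u hu => S.htrajODE x α u hu.1
  set φ : ℝ → ℝ := fun u => ‖h u‖ with hφdef
  have hφc : ContinuousOn φ (Icc 0 τ) := hhc.norm
  have hφnn : ∀ u ∈ Icc (0:ℝ) τ, 0 ≤ φ u := fun u _ => norm_nonneg _
  have hMx : 0 ≤ M * (1 + ‖x‖) := by positivity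
  have hφineq : ∀ u ∈ Icc (0:ℝ) τ,
      φ u ≤ M * (1 + ‖x‖) * τ + M * ∫ s in (0:ℝ)..u, φ s := by
    intro u hu
    have hiu : IntervalIntegrable g volume 0 u := S.integrable_traj hα x hu.1
    have h1 : φ u ≤ ∫ s in (0:ℝ)..u, ‖g s‖ := by
      simpa [hφdef, hhdef] using intervalIntegral.norm_integral_le_integral_norm (f := g) hu.1
    have h2 : ∀ s ∈ Icc (0:ℝ) u, ‖g s‖ ≤ M * (1 + ‖x‖) + M * φ s := by
      intro s hs
      have hse : S.traj x α s = x + h s := htraj_eq s ⟨hs.1, hs.2.trans hu.2⟩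
      have hg1 : ‖g s‖ ≤ M * (1 + ‖S.traj x α s‖) := hMg _ _ (hα.2 s)
      have hg2 : ‖S.traj x α s‖ ≤ ‖x‖ + φ s := by
        rw [hse]; exact norm_add_le _ _
      calc ‖g s‖ ≤ M * (1 + (‖x‖ + φ s)) := hg1.trans (by nlinarith)
        _ = M * (1 + ‖x‖) + M * φ s := by ring
    have h3 : ∫ s in (0:ℝ)..u, ‖g s‖ ≤ ∫ s in (0:ℝ)..u, (M * (1 + ‖x‖) + M * φ s) := by
      apply intervalIntegral.integral_mono_on hu.1 hiu.norm
      · exact (intervalIntegrable_const).add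
          (((hφc.mono (Icc_subset_Icc le_rfl hu.2)).intervalIntegrable_of_Icc hu.1).const_mul M)
      · exact h2
    have h4 : ∫ s in (0:ℝ)..u, (M * (1 + ‖x‖) + M * φ s)
        = M * (1 + ‖x‖) * u + M * ∫ s in (0:ℝ)..u, φ s := by
      rw [intervalIntegral.integral_add intervalIntegrable_const
        (((hφc.mono (Icc_subset_Icc le_rfl hu.2)).intervalIntegrable_of_Icc hu.1).const_mul M),
        intervalIntegral.integral_const, intervalIntegral.integral_const_mul]
      simp [smul_eq_mul]; ring
    have hu1 : M * (1 + ‖x‖) * u ≤ M * (1 + ‖x‖) * τ :=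
      mul_le_mul_of_nonneg_left hu.2 hMx
    linarith [h1.trans (h3.trans_eq h4)]
  intro t ht
  have := gronwall_int (by positivity) hM.le hφc hφnn hφineq t ht
  have hexp : Real.exp (M * t) ≤ Real.exp (M * τ) :=
    Real.exp_le_exp.mpr (mul_le_mul_of_nonneg_left ht.2 hM.le)
  have hfin : ‖S.traj x α t - x‖ = φ t := by
    rw [htraj_eq t ht]; simp [hφdef]
  rw [hfin]
  calc φ t ≤ M * (1 + ‖x‖) * τ * Real.exp (M * t) := this
    _ ≤ M * (1 + ‖x‖) * τ * Real.exp (M * τ) := by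
        have : 0 ≤ M * (1 + ‖x‖) * τ := by positivity
        exact mul_le_mul_of_nonneg_left hexp this

theorem traj_unique {γ : Ctrl m} (hγ : S.Adm γ) (y : Pt n) (w : ℝ → Pt n)
    (hwc : ContinuousOn w (Ici 0))
    (hw : ∀ t, 0 ≤ t → w t = y + ∫ s in (0:ℝ)..t, S.f (w s) (γ s)) :
    ∀ t, 0 ≤ t → S.traj y γ t = w t := by
  intro τ hτ
  obtain ⟨M, hM, hMg⟩ := S.hgrowth
  set u : ℝ → Pt n := S.traj y γ with hudef
  set gu : ℝ → Pt n := S.vf y γ with hgudef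
  set gw : ℝ → Pt n := fun s => S.f (w s) (γ s) with hgwdef
  have huc : ContinuousOn u (Icc 0 τ) := (S.contOn_traj hγ y).mono (fun s hs => hs.1)
  have hwc' : ContinuousOn w (Icc 0 τ) := hwc.mono (fun s hs => hs.1)
  have hRu : ∀ t ∈ Icc (0:ℝ) τ, ‖u t‖ ≤ ‖y‖ + M * (1 + ‖y‖) * τ * Real.exp (M * τ) := by
    intro t ht
    have := S.norm_traj_le hγ y hτ hM hMg t ht
    calc ‖u t‖ = ‖y + (u t - y)‖ := by rw [show y + (u t - y) = u t by abel]
      _ ≤ ‖y‖ + ‖u t - y‖ := norm_add_le _ _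
      _ ≤ _ := by linarith
  obtain ⟨Rw, hRw⟩ := IsCompact.exists_bound_of_continuousOn isCompact_Icc hwc'
  set R : ℝ := max (max (‖y‖ + M * (1 + ‖y‖) * τ * Real.exp (M * τ)) Rw) 1 with hRdef
  have hR : 0 < R := lt_of_lt_of_le one_pos (le_max_right _ _)
  obtain ⟨L, hL, hLf⟩ := S.hfLip R hR
  have huball : ∀ t ∈ Icc (0:ℝ) τ, u t ∈ Metric.closedBall (0 : Pt n) R := by
    intro t ht
    rw [Metric.mem_closedBall, dist_zero_right]
    exact (hRu t ht).trans ((le_max_left _ _).trans (le_max_left _ _))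
  have hwball : ∀ t ∈ Icc (0:ℝ) τ, w t ∈ Metric.closedBall (0 : Pt n) R := by
    intro t ht
    rw [Metric.mem_closedBall, dist_zero_right]
    exact (hRw t ht).trans ((le_max_right _ _).trans (le_max_left _ _))
  have hgu_int : ∀ t ∈ Icc (0:ℝ) τ, IntervalIntegrable gu volume 0 t :=
    fun t ht => S.integrable_traj hγ y ht.1
  have hgw_int : ∀ t ∈ Icc (0:ℝ) τ, IntervalIntegrable gw volume 0 t := by
    intro t ht
    rw [intervalIntegrable_iff, uIoc_of_le ht.1]
    have hmeas : AEStronglyMeasurable gw (volume.restrict (Ioc 0 t)) := by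
      have h1 : AEMeasurable w (volume.restrict (Ioc 0 t)) :=
        (hwc.mono (fun s hs => hs.1.le)).aemeasurable measurableSet_Ioc
      exact (S.hfcont.measurable.comp_aemeasurable
        (h1.prodMk hγ.1.aemeasurable)).aestronglyMeasurable
    refine Integrable.mono' (g := fun _ => M * (1 + R))
      ((integrableOn_const_iff (by finiteness)).mpr (Or.inr (by simp [Real.volume_Ioc]))) hmeas ?_
    filter_upwards [ae_restrict_mem measurableSet_Ioc] with s hs
    have hs' : s ∈ Icc (0:ℝ) τ := ⟨hs.1.le, hs.2.trans ht.2⟩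
    have h1 : ‖gw s‖ ≤ M * (1 + ‖w s‖) := hMg _ _ (hγ.2 s)
    have h2 : ‖w s‖ ≤ R := by
      have := hwball s hs'
      rwa [Metric.mem_closedBall, dist_zero_right] at this
    calc ‖gw s‖ ≤ M * (1 + ‖w s‖) := h1
      _ ≤ M * (1 + R) := by nlinarith
  set φ : ℝ → ℝ := fun t => ‖u t - w t‖ with hφdef
  have hφc : ContinuousOn φ (Icc 0 τ) := (huc.sub hwc').norm
  have hφnn : ∀ t ∈ Icc (0:ℝ) τ, 0 ≤ φ t := fun t _ => norm_nonneg _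
  have hφineq : ∀ t ∈ Icc (0:ℝ) τ, φ t ≤ 0 + L * ∫ s in (0:ℝ)..t, φ s := by
    intro t ht
    have heq : u t - w t = ∫ s in (0:ℝ)..t, (gu s - gw s) := by
      rw [intervalIntegral.integral_sub (hgu_int t ht) (hgw_int t ht)]
      have h1 : u t = y + ∫ s in (0:ℝ)..t, gu s := S.htrajODE y γ t ht.1
      have h2 : w t = y + ∫ s in (0:ℝ)..t, gw s := hw t ht.1
      rw [h1, h2]; abel
    have h1 : φ t ≤ ∫ s in (0:ℝ)..t, ‖gu s - gw s‖ := by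
      rw [hφdef]
      simp only
      rw [heq]
      exact intervalIntegral.norm_integral_le_integral_norm ht.1
    have h2 : ∀ s ∈ Icc (0:ℝ) t, ‖gu s - gw s‖ ≤ L * φ s := by
      intro s hs
      have hs' : s ∈ Icc (0:ℝ) τ := ⟨hs.1, hs.2.trans ht.2⟩
      have hd : dist (S.f (u s) (γ s)) (S.f (w s) (γ s)) ≤ L * dist (u s) (w s) := by
        have := (hLf (γ s) (hγ.2 s)).dist_le_mul (u s) (huball s hs') (w s) (hwball s hs')
        rwa [Real.coe_toNNReal L hL.le] at this
      calc ‖gu s - gw s‖ = dist (S.f (u s) (γ s)) (S.f (w s) (γ s)) := by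
            rw [dist_eq_norm]; rfl
        _ ≤ L * dist (u s) (w s) := hd
        _ = L * φ s := by rw [dist_eq_norm]
    have h3 : ∫ s in (0:ℝ)..t, ‖gu s - gw s‖ ≤ ∫ s in (0:ℝ)..t, L * φ s := by
      apply intervalIntegral.integral_mono_on ht.1 ((hgu_int t ht).sub (hgw_int t ht)).norm
      · exact ((hφc.mono (Icc_subset_Icc le_rfl ht.2)).intervalIntegrable_of_Icc ht.1).const_mul L
      · exact h2
    have h4 : ∫ s in (0:ℝ)..t, L * φ s = L * ∫ s in (0:ℝ)..t, φ s :=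
      intervalIntegral.integral_const_mul _ _
    linarith [h1.trans (h3.trans_eq h4)]
  have := gronwall_int le_rfl hL.le hφc hφnn hφineq τ ⟨hτ, le_rfl⟩
  have hφτ : φ τ = 0 := le_antisymm (by simpa using this) (norm_nonneg _)
  have : u τ - w τ = 0 := by rwa [hφdef, norm_eq_zero] at hφτ
  exact sub_eq_zero.mp this
theorem exitTimeTo_le {K : Set (Pt n)} {x : Pt n} {α : Ctrl m} {s : ℝ}
    (h0 : 0 ≤ s) (hs : S.traj x α s ∈ K) :
    S.exitTimeTo K x α ≤ ENNReal.ofReal s :=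
  iInf_le (fun t : {t : ℝ // 0 ≤ t ∧ S.traj x α t ∈ K} => ENNReal.ofReal t.1) ⟨s, h0, hs⟩

theorem entry_closed {α : Ctrl m} (hα : S.Adm α) (x : Pt n) :
    IsClosed {t : ℝ | 0 ≤ t ∧ S.traj x α t ∈ S.T} := by
  have heq : {t : ℝ | 0 ≤ t ∧ S.traj x α t ∈ S.T} = Ici 0 ∩ (S.traj x α) ⁻¹' S.T := by
    ext t; simp [mem_Ici]
  rw [heq]
  exact (S.contOn_traj hα x).preimage_isClosed_of_isClosed isClosed_Ici S.hTclosed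

theorem exitTime_attained {x : Pt n} {α : Ctrl m} (hα : S.Adm α) {ts : ℝ} (ht : 0 ≤ ts)
    (hle : S.exitTime x α ≤ ENNReal.ofReal ts) :
    ∃ s₀ ∈ Icc (0:ℝ) ts, S.traj x α s₀ ∈ S.T ∧ S.exitTime x α = ENNReal.ofReal s₀ := by
  classical
  set E : Set ℝ := {t : ℝ | 0 ≤ t ∧ S.traj x α t ∈ S.T} with hEdef
  have hEclosed : IsClosed E := S.entry_closed hα x
  set E' : Set ℝ := E ∩ Icc 0 ts with hE'def
  have hE'ne : E'.Nonempty := by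
    by_contra hcon
    have hgt : ∀ s ∈ E, ts < s := by
      intro s hs
      by_contra hle'
      exact hcon ⟨s, hs, ⟨hs.1, not_lt.mp hle'⟩⟩
    have hge : ENNReal.ofReal ts ≤ S.exitTime x α := by
      apply le_iInf
      rintro ⟨s, h0, hsT⟩
      exact ENNReal.ofReal_le_ofReal (hgt s ⟨h0, hsT⟩).le
    have heq : S.exitTime x α = ENNReal.ofReal ts := le_antisymm hle hge
    have hclos : ts ∈ closure E := by
      rw [Metric.mem_closure_iff]
      intro ε hε
      have hlt : S.exitTime x α < ENNReal.ofReal (ts + ε) := by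
        rw [heq]
        exact ENNReal.ofReal_lt_ofReal_iff_of_nonneg ht |>.mpr (by linarith)
      obtain ⟨⟨s, h0, hsT⟩, hs⟩ := iInf_lt_iff.mp hlt
      refine ⟨s, ⟨h0, hsT⟩, ?_⟩
      have h1 : s < ts + ε := (ENNReal.ofReal_lt_ofReal_iff_of_nonneg h0).mp hs
      have h2 : ts < s := hgt s ⟨h0, hsT⟩
      rw [Real.dist_eq, abs_of_neg (by linarith : ts - s < 0)]
      linarith
    have : ts ∈ E := hEclosed.closure_subset hclos
    exact hcon ⟨ts, this, ⟨ht, le_rfl⟩⟩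
  have hE'closed : IsClosed E' := hEclosed.inter isClosed_Icc
  have hE'bdd : BddBelow E' := ⟨0, fun s hs => hs.1.1⟩
  set s₀ := sInf E' with hs₀def
  have hs₀mem : s₀ ∈ E' := hE'closed.csInf_mem hE'ne hE'bdd
  refine ⟨s₀, hs₀mem.2, hs₀mem.1.2, le_antisymm
    (S.exitTimeTo_le hs₀mem.1.1 hs₀mem.1.2) ?_⟩
  apply le_iInf
  rintro ⟨s, h0, hsT⟩
  apply ENNReal.ofReal_le_ofReal
  by_cases hsts : s ≤ ts
  · exact csInf_le hE'bdd ⟨⟨h0, hsT⟩, ⟨h0, hsts⟩⟩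
  · exact hs₀mem.2.2.trans (not_le.mp hsts).le
theorem concat_Adm {α β : Ctrl m} (hα : S.Adm α) (hβ : S.Adm β) (t₁ : ℝ) :
    S.Adm (fun t => if t < t₁ then α t else β (t - t₁)) := by
  constructor
  · exact Measurable.ite measurableSet_Iio hα.1 (hβ.1.comp (measurable_id.sub measurable_const))
  · intro t; by_cases h : t < t₁ <;> simp [h, hα.2, hβ.2]

theorem concat_traj {α β : Ctrl m} (hα : S.Adm α) (hβ : S.Adm β) (y : Pt n) {t₁ : ℝ}
    (ht₁ : 0 ≤ t₁) :
    (∀ t ∈ Icc (0:ℝ) t₁,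
      S.traj y (fun t => if t < t₁ then α t else β (t - t₁)) t = S.traj y α t) ∧
    (∀ t, t₁ ≤ t →
      S.traj y (fun t => if t < t₁ then α t else β (t - t₁)) t
        = S.traj (S.traj y α t₁) β (t - t₁)) := by
  set z := S.traj y α t₁ with hzdef
  set γ : Ctrl m := fun t => if t < t₁ then α t else β (t - t₁) with hγdef
  have hγAdm : S.Adm γ := S.concat_Adm hα hβ t₁
  set w : ℝ → Pt n := fun t => if t ≤ t₁ then S.traj y α t else S.traj z β (t - t₁) with hwdef
  set gα : ℝ → Pt n := S.vf y α with hgαdef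
  set gβ : ℝ → Pt n := S.vf z β with hgβdef
  set gw : ℝ → Pt n := fun s => S.f (w s) (γ s) with hgwdef
  have hwz : w t₁ = z := by simp [hwdef]; exact hzdef.symm
  have hwle : ∀ s, s ≤ t₁ → w s = S.traj y α s := by
    intro s hs; simp [hwdef, hs]
  have hgON : ∀ s, t₁ ≤ s → w s = S.traj z β (s - t₁) := by
    intro s hs
    rcases eq_or_lt_of_le hs with he | hl
    · rw [hwdef]; simp only [← he]; simp [S.htraj0]; exact hzdef.symm
    · simp [hwdef, not_le.mpr hl]
  have he1 : ∀ s, s < t₁ → gw s = gα s := by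
    intro s hs; simp [hgwdef, hgαdef, vf, hwdef, hγdef, hs, hs.le]
  have he2 : ∀ s, t₁ ≤ s → gw s = gβ (s - t₁) := by
    intro s hs
    rw [hgwdef, hgβdef]
    show S.f (w s) (γ s) = S.vf z β (s - t₁)
    have hγs : γ s = β (s - t₁) := by simp [hγdef, not_lt.mpr hs]
    rw [hgON s hs, hγs]; rfl
  have hne : ∀ᵐ s ∂(volume : Measure ℝ), s ≠ t₁ := by
    have h0 : volume ({t₁} : Set ℝ) = 0 := measure_singleton _
    filter_upwards [compl_mem_ae_iff.mpr h0] with s hs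
    simpa using hs
  -- integrability of gw on [0, t₁] and [t₁, b]
  have hint1 : IntervalIntegrable gw volume 0 t₁ := by
    rw [intervalIntegrable_iff, uIoc_of_le ht₁]
    have hgα_int : IntegrableOn gα (Ioc 0 t₁) volume := by
      have := S.integrable_traj hα y ht₁
      rwa [intervalIntegrable_iff, uIoc_of_le ht₁] at this
    refine hgα_int.congr ?_
    filter_upwards [ae_restrict_mem measurableSet_Ioc, ae_restrict_of_ae hne] with s hs hsne
    exact (he1 s (lt_of_le_of_ne hs.2 hsne)).symm
  have hint2 : ∀ b, t₁ ≤ b → IntervalIntegrable gw volume t₁ b := by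
    intro b hb
    rw [intervalIntegrable_iff, uIoc_of_le hb]
    have hshift : IntegrableOn (fun s => gβ (s - t₁)) (Ioc t₁ b) volume := by
      have h1 : IntervalIntegrable gβ volume 0 (b - t₁) :=
        S.integrable_traj hβ z (by linarith)
      have h2 := h1.comp_sub_right t₁
      simp only [zero_add, sub_add_cancel] at h2
      rwa [intervalIntegrable_iff, uIoc_of_le hb] at h2
    refine hshift.congr ?_
    filter_upwards [ae_restrict_mem measurableSet_Ioc] with s hs
    exact (he2 s hs.1.le).symm
  -- w is continuous on [0, ∞)
  have hwc : ContinuousOn w (Ici 0) := by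
    intro t htmem
    rcases lt_trichotomy t t₁ with hlt | heq | hgt
    · have hev : ∀ᶠ s in nhdsWithin t (Ici 0), w s = S.traj y α s := by
        filter_upwards [nhdsWithin_le_nhds (Iio_mem_nhds hlt)] with s hs
        exact hwle s (le_of_lt hs)
      exact ((S.contOn_traj hα y t htmem).congr_of_eventuallyEq hev (hwle t hlt.le)).mono
        (subset_rfl)
    · -- t = t₁
      subst heq
      have hp1 : ContinuousWithinAt w (Ici 0 ∩ Iic t) t := by
        refine ((S.contOn_traj hα y t htmem).mono inter_subset_left).congr ?_ (hwle t le_rfl)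
        intro s hs; exact hwle s hs.2
      have hp2 : ContinuousWithinAt w (Ici 0 ∩ Ici t) t := by
        have hc : ContinuousWithinAt (fun s => S.traj z β (s - t)) (Ici t) t := by
          refine ContinuousWithinAt.comp (t := Ici 0) (S.contOn_traj hβ z _ ?_) ?_ ?_
          · simp
          · exact (continuousWithinAt_id.sub continuousWithinAt_const)
          · intro s hs; simpa using hs
        refine (hc.mono inter_subset_right).congr ?_ ?_
        · intro s hs; exact hgON s hs.2
        · exact (hgON t le_rfl)
      have := hp1.union hp2
      rwa [← inter_union_distrib_left, Iic_union_Ici, inter_univ] at this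
    · have hc : ContinuousWithinAt (fun s => S.traj z β (s - t₁)) (Ici t₁) t := by
        refine ContinuousWithinAt.comp (t := Ici 0) (S.contOn_traj hβ z _ ?_) ?_ ?_
        · simp [hgt.le]
        · exact (continuousWithinAt_id.sub continuousWithinAt_const)
        · intro s hs; simpa using hs
      have hev : ContinuousWithinAt w (Ici t₁) t :=
        hc.congr (fun s hs => hgON s hs) (hgON t hgt.le)
      apply hev.mono_of_mem_nhdsWithin
      apply mem_nhdsWithin.mpr
      exact ⟨Ioi t₁, isOpen_Ioi, hgt, fun s hs => mem_Ici.mpr (le_of_lt hs.1)⟩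
  -- w satisfies the integral equation for the control γ
  have hode : ∀ t, 0 ≤ t → w t = y + ∫ s in (0:ℝ)..t, S.f (w s) (γ s) := by
    intro t ht0
    by_cases hcase : t ≤ t₁
    · have hcongr : ∫ s in (0:ℝ)..t, gw s = ∫ s in (0:ℝ)..t, gα s := by
        apply intervalIntegral.integral_congr_ae
        filter_upwards [hne] with s hsne hsmem
        rw [uIoc_of_le ht0] at hsmem
        exact he1 s (lt_of_le_of_ne (hsmem.2.trans hcase) hsne)
      have heqt : S.traj y α t = y + ∫ s in (0:ℝ)..t, gα s := S.htrajODE y α t ht0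
      rw [hwle t hcase, heqt, hcongr]
    · push_neg at hcase
      have hsplit : ∫ s in (0:ℝ)..t, gw s
          = (∫ s in (0:ℝ)..t₁, gw s) + ∫ s in t₁..t, gw s :=
        (intervalIntegral.integral_add_adjacent_intervals hint1 (hint2 t hcase.le)).symm
      have hpart1 : ∫ s in (0:ℝ)..t₁, gw s = z - y := by
        have hcongr : ∫ s in (0:ℝ)..t₁, gw s = ∫ s in (0:ℝ)..t₁, gα s := by
          apply intervalIntegral.integral_congr_ae
          filter_upwards [hne] with s hsne hsmem
          rw [uIoc_of_le ht₁] at hsmem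
          exact he1 s (lt_of_le_of_ne hsmem.2 hsne)
        have heqz : z = y + ∫ s in (0:ℝ)..t₁, gα s := S.htrajODE y α t₁ ht₁
        rw [hcongr]; rw [heqz]; abel
      have hpart2 : ∫ s in t₁..t, gw s = S.traj z β (t - t₁) - z := by
        have hcongr : ∫ s in t₁..t, gw s = ∫ s in t₁..t, (fun s => gβ (s - t₁)) s := by
          apply intervalIntegral.integral_congr
          intro s hs
          rw [uIcc_of_le hcase.le] at hs
          exact he2 s hs.1
        have hshift : ∫ s in t₁..t, (fun s => gβ (s - t₁)) s = ∫ s in (0:ℝ)..(t - t₁), gβ s := by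
          rw [intervalIntegral.integral_comp_sub_right _ t₁]
          norm_num
        have heqz : S.traj z β (t - t₁) = z + ∫ s in (0:ℝ)..(t - t₁), gβ s :=
          S.htrajODE z β (t - t₁) (by linarith)
        rw [hcongr, hshift, heqz]; abel
      calc w t = S.traj z β (t - t₁) := hgON t hcase.le
        _ = y + ((z - y) + (S.traj z β (t - t₁) - z)) := by abel
        _ = y + ∫ s in (0:ℝ)..t, S.f (w s) (γ s) := by
            rw [show (∫ s in (0:ℝ)..t, S.f (w s) (γ s)) = ∫ s in (0:ℝ)..t, gw s from rfl,
              hsplit, hpart1, hpart2]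
  have huniq := S.traj_unique hγAdm y w hwc hode
  constructor
  · intro t htm
    rw [huniq t htm.1]
    exact hwle t htm.2
  · intro t htm
    rw [huniq t (ht₁.trans htm)]
    exact hgON t htm
theorem V_le {x : Pt n} {α : Ctrl m} (h : S.AsympAdm x α) : S.V x ≤ S.cost x α :=
  iInf₂_le α h

theorem exists_cost_lt {x : Pt n} {c : ℝ≥0∞} (h : S.V x < c) :
    ∃ α, S.AsympAdm x α ∧ S.cost x α < c := by
  obtain ⟨α, hα⟩ := iInf_lt_iff.mp h
  obtain ⟨hAA, hc⟩ := iInf_lt_iff.mp hα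
  exact ⟨α, hAA, hc⟩

theorem exit_concat_le {α β : Ctrl m} (y : Pt n) {t₁ : ℝ} (ht₁ : 0 ≤ t₁)
    (h2 : ∀ t, t₁ ≤ t →
      S.traj y (fun t => if t < t₁ then α t else β (t - t₁)) t
        = S.traj (S.traj y α t₁) β (t - t₁)) :
    S.exitTime y (fun t => if t < t₁ then α t else β (t - t₁))
      ≤ ENNReal.ofReal t₁ + S.exitTime (S.traj y α t₁) β := by
  rw [← tsub_le_iff_left]
  apply le_iInf
  rintro ⟨s, h0, hT⟩
  rw [tsub_le_iff_left, ← ENNReal.ofReal_add ht₁ h0]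
  apply S.exitTimeTo_le (by linarith)
  rw [h2 (t₁ + s) (by linarith), add_sub_cancel_left]
  exact hT

theorem asympAdm_concat {α β : Ctrl m} (hα : S.Adm α) (y : Pt n) {t₁ : ℝ} (ht₁ : 0 ≤ t₁)
    (hβAA : S.AsympAdm (S.traj y α t₁) β)
    (h2 : ∀ t, t₁ ≤ t →
      S.traj y (fun t => if t < t₁ then α t else β (t - t₁)) t
        = S.traj (S.traj y α t₁) β (t - t₁)) :
    S.AsympAdm y (fun t => if t < t₁ then α t else β (t - t₁)) := by
  refine ⟨S.concat_Adm hα hβAA.1 t₁, ?_⟩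
  rcases hβAA.2 with hfin | hlim
  · left
    exact lt_of_le_of_lt (S.exit_concat_le y ht₁ h2)
      (ENNReal.add_lt_top.mpr ⟨ENNReal.ofReal_lt_top, hfin⟩)
  · right
    have hev : (fun t => infDist (S.traj y (fun t => if t < t₁ then α t else β (t - t₁)) t) S.T)
        =ᶠ[atTop] ((fun s => infDist (S.traj (S.traj y α t₁) β s) S.T) ∘ (fun t => t - t₁)) := by
      filter_upwards [eventually_ge_atTop t₁] with t ht
      simp only [Function.comp_apply, h2 t ht]
    rw [Filter.liminf_congr hev, Filter.liminf_comp]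
    have hmap : Filter.map (fun t : ℝ => t - t₁) atTop = atTop := by
      apply Filter.map_atTop_eq_of_gc (fun b => b + t₁) 0
      · intro a b hab; simp; linarith
      · intro a c _; constructor <;> intro h <;> linarith
      · intro c _; simp
    rw [hmap]
    exact hlim

theorem cost_concat_le {α β : Ctrl m} (hα : S.Adm α) (hβ : S.Adm β) (y : Pt n) {t₁ : ℝ}
    (ht₁ : 0 ≤ t₁) :
    S.cost y (fun t => if t < t₁ then α t else β (t - t₁))
      ≤ (∫⁻ t in Ico (0:ℝ) t₁, ENNReal.ofReal (S.l (S.traj y α t) (α t)))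
        + S.cost (S.traj y α t₁) β := by
  obtain ⟨h1, h2⟩ := S.concat_traj hα hβ y ht₁
  set z := S.traj y α t₁ with hzdef
  set γ : Ctrl m := fun t => if t < t₁ then α t else β (t - t₁) with hγdef
  set e := S.exitTime y γ with hedef
  set E : Set ℝ := {t : ℝ | 0 ≤ t ∧ ENNReal.ofReal t < e} with hEdef
  set P : ℝ → ℝ≥0∞ := fun t => ENNReal.ofReal (S.l (S.traj y γ t) (γ t)) with hPdef
  have hcost : S.cost y γ = ∫⁻ t in E, P t := rfl
  have hEsplit : E = (E ∩ Iio t₁) ∪ (E ∩ Ici t₁) := by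
    rw [← inter_union_distrib_left, Iio_union_Ici, inter_univ]
  have hpart1 : ∫⁻ t in E ∩ Iio t₁, P t
      ≤ ∫⁻ t in Ico (0:ℝ) t₁, ENNReal.ofReal (S.l (S.traj y α t) (α t)) := by
    have hsub : E ∩ Iio t₁ ⊆ Ico 0 t₁ := fun t ht => ⟨ht.1.1, ht.2⟩
    refine le_trans (lintegral_mono_set hsub) (le_of_eq ?_)
    apply setLIntegral_congr_fun_ae measurableSet_Ico
    filter_upwards with t ht
    have hγt : γ t = α t := by simp [hγdef, ht.2]
    simp only [hPdef]
    rw [h1 t ⟨ht.1, ht.2.le⟩, hγt]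
  have hexit : e ≤ ENNReal.ofReal t₁ + S.exitTime z β := S.exit_concat_le y ht₁ h2
  have hpart2 : ∫⁻ t in E ∩ Ici t₁, P t ≤ S.cost z β := by
    set E' : Set ℝ := {s : ℝ | 0 ≤ s ∧ ENNReal.ofReal s < S.exitTime z β} with hE'def
    have hE'meas : MeasurableSet E' := by
      have : E' = Ici 0 ∩ (fun s : ℝ => ENNReal.ofReal s) ⁻¹' (Iio (S.exitTime z β)) := by
        ext s; simp [hE'def, mem_Ici, and_comm]
      rw [this]
      exact measurableSet_Ici.inter (ENNReal.measurable_ofReal measurableSet_Iio)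
    have hemb : MeasurableEmbedding (fun s : ℝ => s + t₁) :=
      (MeasurableEquiv.addRight t₁).measurableEmbedding
    have hmp : MeasurePreserving (fun s : ℝ => s + t₁) volume volume :=
      measurePreserving_add_right volume t₁
    have hsub : E ∩ Ici t₁ ⊆ (fun s : ℝ => s + t₁) '' E' := by
      rintro t ⟨⟨ht0, hte⟩, ht1⟩
      refine ⟨t - t₁, ⟨by simpa using ht1, ?_⟩, by ring⟩
      have heq : ENNReal.ofReal t = ENNReal.ofReal t₁ + ENNReal.ofReal (t - t₁) := by
        rw [← ENNReal.ofReal_add ht₁ (by simpa [sub_nonneg] using ht1)]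
        ring_nf
      have hlt : ENNReal.ofReal t₁ + ENNReal.ofReal (t - t₁)
          < ENNReal.ofReal t₁ + S.exitTime z β := by
        rw [← heq]; exact lt_of_lt_of_le hte hexit
      exact (ENNReal.add_lt_add_iff_left ENNReal.ofReal_ne_top).mp hlt
    calc ∫⁻ t in E ∩ Ici t₁, P t ≤ ∫⁻ t in (fun s : ℝ => s + t₁) '' E', P t :=
          lintegral_mono_set hsub
      _ = ∫⁻ t in (fun s : ℝ => s + t₁) '' E',
            ENNReal.ofReal (S.l (S.traj z β (t - t₁)) (β (t - t₁))) := by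
          apply setLIntegral_congr_fun_ae (hemb.measurableSet_image.mpr hE'meas)
          filter_upwards with t ht
          obtain ⟨s, hs, rfl⟩ := ht
          have hst : t₁ ≤ s + t₁ := by linarith [hs.1]
          have hγt : γ (s + t₁) = β (s + t₁ - t₁) := by
            simp [hγdef, not_lt.mpr hst]
          simp only [hPdef, h2 (s + t₁) hst, hγt]
      _ = ∫⁻ s in E', ENNReal.ofReal (S.l (S.traj z β (s + t₁ - t₁)) (β (s + t₁ - t₁))) :=
          (hmp.setLIntegral_comp_emb hemb
            (fun t => ENNReal.ofReal (S.l (S.traj z β (t - t₁)) (β (t - t₁)))) E').symm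
      _ = ∫⁻ s in E', ENNReal.ofReal (S.l (S.traj z β s) (β s)) := by
          simp only [add_sub_cancel_right]
      _ = S.cost z β := rfl
  calc S.cost y γ = ∫⁻ t in E, P t := hcost
    _ = ∫⁻ t in (E ∩ Iio t₁) ∪ (E ∩ Ici t₁), P t := by rw [← hEsplit]
    _ ≤ (∫⁻ t in E ∩ Iio t₁, P t) + ∫⁻ t in E ∩ Ici t₁, P t := lintegral_union_le _ _ _
    _ ≤ _ := add_le_add hpart1 hpart2
set_option maxHeartbeats 1000000 in
theorem keyU (hTne : S.T.Nonempty)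
    (hcont : ∀ η > (0:ℝ), ∃ δ > (0:ℝ), ∀ x ∉ S.T,
      infDist x S.T < δ → S.V x ≤ ENNReal.ofReal η)
    (hTPC : ∀ R > (0:ℝ), ∀ η > (0:ℝ), ∀ δ > (0:ℝ), ∃ Tfn : ℝ → ℝ,
      Monotone Tfn ∧
      ∀ x ∉ S.T, S.V x < ⊤ → δ ≤ infDist x S.T → infDist x S.T ≤ R →
        ∃ α, S.AsympAdm x α ∧ S.cost x α ≤ S.V x + ENNReal.ofReal η ∧
          ∃ t ∈ Set.Icc (0:ℝ) (Tfn (S.V x).toReal),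
            S.traj x α t ∈ Metric.cthickening δ S.T)
    {x₀ : Pt n} (hx₀ : x₀ ∉ S.T) {η K : ℝ} (hη : 0 < η) (hK : 0 ≤ K) :
    ∃ r > (0:ℝ), ∀ x y : Pt n, dist x x₀ ≤ r → dist y x₀ ≤ r →
      S.V x ≤ ENNReal.ofReal K → S.V y ≤ S.V x + ENNReal.ofReal η := by
  classical
  obtain ⟨M, hM, hMg⟩ := S.hgrowth
  set d₀ := infDist x₀ S.T with hd₀def
  have hd₀ : 0 < d₀ := (S.hTclosed.notMem_iff_infDist_pos hTne).mp hx₀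
  obtain ⟨δ₀, hδ₀, hδ₀prop⟩ := hcont (η/4) (by linarith)
  set δ : ℝ := min (δ₀/4) (d₀/2) with hδdef
  have hδpos : 0 < δ := lt_min (by linarith) (by linarith)
  obtain ⟨Tfn, hTmono, hTprop⟩ := hTPC (d₀ + 1) (by linarith) (η/4) (by linarith) δ hδpos
  set τ : ℝ := max (Tfn K) 0 with hτdef
  have hτ0 : 0 ≤ τ := le_max_right _ _
  set N : ℝ := ‖x₀‖ + 1 with hNdef
  set Cg : ℝ := M * (1 + N) * τ * Real.exp (M * τ) with hCgdef
  have hN0 : 0 < N := by positivity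
  have hCg0 : 0 ≤ Cg := by positivity
  set B : ℝ := max (N + Cg) 1 with hBdef
  have hB : 0 < B := lt_of_lt_of_le one_pos (le_max_right _ _)
  obtain ⟨L, hL, hLf⟩ := S.hfLip B hB
  obtain ⟨Ll, hLl, hLlf⟩ := S.hlLip B hB
  set ε₁ : ℝ := min (δ₀/4) (η/(4 * Ll * (τ + 1))) with hε₁def
  have hε₁pos : 0 < ε₁ := lt_min (by linarith) (by positivity)
  set r : ℝ := min 1 (min (d₀/2) (ε₁ * Real.exp (-(L * τ)) / 2)) with hrdef
  have hr : 0 < r := lt_min one_pos (lt_min (by linarith) (by positivity))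
  refine ⟨r, hr, ?_⟩
  intro x y hx hy hVx
  have hr1 : r ≤ 1 := min_le_left _ _
  have hrd : r ≤ d₀/2 := (min_le_right _ _).trans (min_le_left _ _)
  have hrε : r ≤ ε₁ * Real.exp (-(L * τ)) / 2 := (min_le_right _ _).trans (min_le_right _ _)
  have hxnorm : ‖x‖ ≤ N := by
    have : ‖x‖ ≤ ‖x₀‖ + dist x x₀ := by
      rw [dist_eq_norm]
      calc ‖x‖ = ‖x₀ + (x - x₀)‖ := by rw [show x₀ + (x - x₀) = x by abel]
        _ ≤ ‖x₀‖ + ‖x - x₀‖ := norm_add_le _ _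
    rw [hNdef]; linarith
  have hynorm : ‖y‖ ≤ N := by
    have : ‖y‖ ≤ ‖x₀‖ + dist y x₀ := by
      rw [dist_eq_norm]
      calc ‖y‖ = ‖x₀ + (y - x₀)‖ := by rw [show x₀ + (y - x₀) = y by abel]
        _ ≤ ‖x₀‖ + ‖y - x₀‖ := norm_add_le _ _
    rw [hNdef]; linarith
  have hdx : d₀ - r ≤ infDist x S.T := by
    have h1 : infDist x₀ S.T ≤ infDist x S.T + dist x₀ x := infDist_le_infDist_add_dist
    rw [dist_comm] at h1
    rw [hd₀def]; linarith
  have hxlb : δ ≤ infDist x S.T := by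
    have : δ ≤ d₀/2 := min_le_right _ _
    linarith
  have hxnotT : x ∉ S.T := by
    intro hmem
    rw [infDist_zero_of_mem hmem] at hdx
    linarith
  have hxub : infDist x S.T ≤ d₀ + 1 := by
    have h1 : infDist x S.T ≤ infDist x₀ S.T + dist x x₀ := infDist_le_infDist_add_dist
    rw [← hd₀def] at h1; linarith
  have hVxfin : S.V x < ⊤ := lt_of_le_of_lt hVx ENNReal.ofReal_lt_top
  obtain ⟨α, hαAA, hαcost, ts, htsmem, htsT⟩ := hTprop x hxnotT hVxfin hxlb hxub
  have hαAdm : S.Adm α := hαAA.1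
  have hts0 : 0 ≤ ts := htsmem.1
  have htsτ : ts ≤ τ := by
    have h1 : (S.V x).toReal ≤ K := ENNReal.toReal_le_of_le_ofReal hK hVx
    have h2 : Tfn ((S.V x).toReal) ≤ Tfn K := hTmono h1
    exact htsmem.2.trans (h2.trans (le_max_left _ _))
  -- the cut time t₁
  obtain ⟨t₁, ht₁mem, ht₁thick, ht₁exit⟩ :
      ∃ t₁ ∈ Icc (0:ℝ) ts, S.traj x α t₁ ∈ Metric.cthickening δ S.T ∧
        ∀ t ∈ Ico (0:ℝ) t₁, ENNReal.ofReal t < S.exitTime x α := by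
    by_cases hce : S.exitTime x α ≤ ENNReal.ofReal ts
    · obtain ⟨s₀, hs₀mem, hs₀T, hs₀eq⟩ := S.exitTime_attained hαAdm hts0 hce
      refine ⟨s₀, hs₀mem, Metric.self_subset_cthickening _ hs₀T, ?_⟩
      intro t ht
      rw [hs₀eq]
      exact (ENNReal.ofReal_lt_ofReal_iff_of_nonneg ht.1).mpr ht.2
    · push_neg at hce
      exact ⟨ts, ⟨hts0, le_rfl⟩, htsT,
        fun t ht => lt_of_le_of_lt (ENNReal.ofReal_le_ofReal ht.2.le) hce⟩
  have ht₁0 : 0 ≤ t₁ := ht₁mem.1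
  have ht₁τ : t₁ ≤ τ := ht₁mem.2.trans htsτ
  -- a priori bounds putting trajectories in the ball of radius B
  have hMτe : 0 ≤ M * τ * Real.exp (M * τ) := by positivity
  have hball : ∀ p : Pt n, ‖p‖ ≤ N → ∀ t ∈ Icc (0:ℝ) τ,
      S.traj p α t ∈ Metric.closedBall (0 : Pt n) B := by
    intro p hp t ht
    have h1 := S.norm_traj_le hαAdm p hτ0 hM hMg t ht
    have h2 : M * (1 + ‖p‖) * τ * Real.exp (M * τ) ≤ Cg := by
      have h3 : 1 + ‖p‖ ≤ 1 + N := by linarith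
      calc M * (1 + ‖p‖) * τ * Real.exp (M * τ)
          = (M * τ * Real.exp (M * τ)) * (1 + ‖p‖) := by ring
        _ ≤ (M * τ * Real.exp (M * τ)) * (1 + N) := mul_le_mul_of_nonneg_left h3 hMτe
        _ = Cg := by rw [hCgdef]; ring
    rw [Metric.mem_closedBall, dist_zero_right]
    have h4 : ‖S.traj p α t‖ ≤ ‖p‖ + ‖S.traj p α t - p‖ := by
      calc ‖S.traj p α t‖ = ‖p + (S.traj p α t - p)‖ := by
            rw [show p + (S.traj p α t - p) = S.traj p α t by abel]
        _ ≤ ‖p‖ + ‖S.traj p α t - p‖ := norm_add_le _ _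
    have h5 : N + Cg ≤ B := le_max_left _ _
    linarith
  have hballx := hball x hxnorm
  have hbally := hball y hynorm
  -- Gronwall comparison between the two trajectories
  have hcomp : ∀ t ∈ Icc (0:ℝ) τ, ‖S.traj y α t - S.traj x α t‖ ≤ ε₁ := by
    set gx : ℝ → Pt n := S.vf x α with hgx
    set gy : ℝ → Pt n := S.vf y α with hgy
    set φ : ℝ → ℝ := fun t => ‖S.traj y α t - S.traj x α t‖ with hφdef
    have hφc : ContinuousOn φ (Icc 0 τ) :=
      (((S.contOn_traj hαAdm y).mono (fun s hs => hs.1)).sub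
        ((S.contOn_traj hαAdm x).mono (fun s hs => hs.1))).norm
    have hφnn : ∀ t ∈ Icc (0:ℝ) τ, 0 ≤ φ t := fun t _ => norm_nonneg _
    have hφineq : ∀ t ∈ Icc (0:ℝ) τ, φ t ≤ dist y x + L * ∫ s in (0:ℝ)..t, φ s := by
      intro t ht
      have hix : IntervalIntegrable gx volume 0 t := S.integrable_traj hαAdm x ht.1
      have hiy : IntervalIntegrable gy volume 0 t := S.integrable_traj hαAdm y ht.1
      have heq : S.traj y α t - S.traj x α t = (y - x) + ∫ s in (0:ℝ)..t, (gy s - gx s) := by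
        rw [intervalIntegral.integral_sub hiy hix]
        have e1 : S.traj y α t = y + ∫ s in (0:ℝ)..t, gy s := S.htrajODE y α t ht.1
        have e2 : S.traj x α t = x + ∫ s in (0:ℝ)..t, gx s := S.htrajODE x α t ht.1
        rw [e1, e2]; abel
      have h1 : φ t ≤ ‖y - x‖ + ‖∫ s in (0:ℝ)..t, (gy s - gx s)‖ := by
        rw [hφdef]; simp only; rw [heq]; exact norm_add_le _ _
      have h2 : ‖∫ s in (0:ℝ)..t, (gy s - gx s)‖ ≤ ∫ s in (0:ℝ)..t, ‖gy s - gx s‖ :=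
        intervalIntegral.norm_integral_le_integral_norm ht.1
      have h3 : ∀ s ∈ Icc (0:ℝ) t, ‖gy s - gx s‖ ≤ L * φ s := by
        intro s hs
        have hs' : s ∈ Icc (0:ℝ) τ := ⟨hs.1, hs.2.trans ht.2⟩
        have hd := (hLf (α s) (hαAdm.2 s)).dist_le_mul (S.traj y α s)
          (hbally s hs') (S.traj x α s) (hballx s hs')
        rw [Real.coe_toNNReal L hL.le] at hd
        calc ‖gy s - gx s‖ = dist (S.f (S.traj y α s) (α s)) (S.f (S.traj x α s) (α s)) := by
              rw [dist_eq_norm]; rfl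
          _ ≤ L * dist (S.traj y α s) (S.traj x α s) := hd
          _ = L * φ s := by rw [dist_eq_norm]
      have h4 : ∫ s in (0:ℝ)..t, ‖gy s - gx s‖ ≤ ∫ s in (0:ℝ)..t, L * φ s := by
        apply intervalIntegral.integral_mono_on ht.1 (hiy.sub hix).norm
        · exact ((hφc.mono (Icc_subset_Icc le_rfl ht.2)).intervalIntegrable_of_Icc ht.1).const_mul L
        · exact h3
      have h5 : ∫ s in (0:ℝ)..t, L * φ s = L * ∫ s in (0:ℝ)..t, φ s :=
        intervalIntegral.integral_const_mul _ _
      have h6 : ‖y - x‖ = dist y x := (dist_eq_norm y x).symm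
      linarith [h1.trans (by linarith [h2.trans (h4.trans_eq h5)] : ‖y - x‖ +
        ‖∫ s in (0:ℝ)..t, (gy s - gx s)‖ ≤ ‖y - x‖ + L * ∫ s in (0:ℝ)..t, φ s)]
    intro t ht
    have := gronwall_int dist_nonneg hL.le hφc hφnn hφineq t ht
    have hdyx : dist y x ≤ 2 * r := by
      have := dist_triangle y x₀ x
      rw [dist_comm x₀ x] at this
      linarith
    have hexp1 : Real.exp (L * t) ≤ Real.exp (L * τ) :=
      Real.exp_le_exp.mpr (mul_le_mul_of_nonneg_left ht.2 hL.le)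
    have hexp2 : 0 < Real.exp (L * τ) := Real.exp_pos _
    have h7 : dist y x * Real.exp (L * t) ≤ 2 * r * Real.exp (L * τ) := by
      apply mul_le_mul hdyx hexp1 (Real.exp_pos _).le (by linarith)
    have h8 : 2 * r * Real.exp (L * τ) ≤ ε₁ := by
      have h9 : 2 * r ≤ ε₁ * Real.exp (-(L * τ)) := by linarith
      calc 2 * r * Real.exp (L * τ) ≤ ε₁ * Real.exp (-(L * τ)) * Real.exp (L * τ) :=
            mul_le_mul_of_nonneg_right h9 hexp2.le
        _ = ε₁ := by rw [mul_assoc, ← Real.exp_add]; simp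
    calc φ t ≤ dist y x * Real.exp (L * t) := this
      _ ≤ ε₁ := h7.trans h8
  set z := S.traj y α t₁ with hzdef
  have hzclose : infDist z S.T < δ₀ := by
    have h1 : infDist (S.traj x α t₁) S.T ≤ δ := by
      have := Metric.mem_cthickening_iff.mp ht₁thick
      have h2 : infDist (S.traj x α t₁) S.T ≤ (ENNReal.ofReal δ).toReal :=
        ENNReal.toReal_mono ENNReal.ofReal_ne_top this
      rwa [ENNReal.toReal_ofReal hδpos.le] at h2
    have h3 : infDist z S.T ≤ infDist (S.traj x α t₁) S.T + dist z (S.traj x α t₁) :=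
      infDist_le_infDist_add_dist
    have h4 : dist z (S.traj x α t₁) ≤ ε₁ := by
      rw [hzdef, dist_eq_norm]
      exact hcomp t₁ ⟨ht₁0, ht₁τ⟩
    have h5 : δ ≤ δ₀/4 := min_le_left _ _
    have h6 : ε₁ ≤ δ₀/4 := min_le_left _ _
    linarith
  -- part-1 cost estimate
  have hI1 : (∫⁻ t in Ico (0:ℝ) t₁, ENNReal.ofReal (S.l (S.traj y α t) (α t)))
      ≤ S.cost x α + ENNReal.ofReal (η/4) := by
    set κ : ℝ := Ll * ε₁ with hκdef
    have hκ0 : 0 ≤ κ := by positivity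
    have hpt : ∀ t ∈ Ico (0:ℝ) t₁,
        ENNReal.ofReal (S.l (S.traj y α t) (α t))
          ≤ ENNReal.ofReal (S.l (S.traj x α t) (α t)) + ENNReal.ofReal κ := by
      intro t ht
      have ht' : t ∈ Icc (0:ℝ) τ := ⟨ht.1, ht.2.le.trans ht₁τ⟩
      have hd := (hLlf (α t) (hαAdm.2 t)).dist_le_mul (S.traj y α t)
        (hbally t ht') (S.traj x α t) (hballx t ht')
      rw [Real.coe_toNNReal Ll hLl.le] at hd
      have h1 : S.l (S.traj y α t) (α t) ≤ S.l (S.traj x α t) (α t) + κ := by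
        have h2 : dist (S.traj y α t) (S.traj x α t) ≤ ε₁ := by
          rw [dist_eq_norm]; exact hcomp t ht'
        have h3 : |S.l (S.traj y α t) (α t) - S.l (S.traj x α t) (α t)| ≤ κ := by
          rw [← Real.dist_eq]
          calc dist (S.l (S.traj y α t) (α t)) (S.l (S.traj x α t) (α t))
              ≤ Ll * dist (S.traj y α t) (S.traj x α t) := hd
            _ ≤ Ll * ε₁ := mul_le_mul_of_nonneg_left h2 hLl.le
        have := abs_le.mp h3
        linarith [this.2]
      calc ENNReal.ofReal (S.l (S.traj y α t) (α t))
          ≤ ENNReal.ofReal (S.l (S.traj x α t) (α t) + κ) := ENNReal.ofReal_le_ofReal h1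
        _ ≤ ENNReal.ofReal (S.l (S.traj x α t) (α t)) + ENNReal.ofReal κ :=
            ENNReal.ofReal_add_le
    have hstep1 : (∫⁻ t in Ico (0:ℝ) t₁, ENNReal.ofReal (S.l (S.traj y α t) (α t)))
        ≤ ∫⁻ t in Ico (0:ℝ) t₁,
            (ENNReal.ofReal (S.l (S.traj x α t) (α t)) + ENNReal.ofReal κ) := by
      apply lintegral_mono_ae
      filter_upwards [ae_restrict_mem measurableSet_Ico] with t ht
      exact hpt t ht
    have hstep2 : (∫⁻ t in Ico (0:ℝ) t₁,
          (ENNReal.ofReal (S.l (S.traj x α t) (α t)) + ENNReal.ofReal κ))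
        = (∫⁻ t in Ico (0:ℝ) t₁, ENNReal.ofReal (S.l (S.traj x α t) (α t)))
          + ENNReal.ofReal κ * volume (Ico (0:ℝ) t₁) := by
      rw [lintegral_add_right' _ aemeasurable_const, setLIntegral_const]
    have hstep3 : (∫⁻ t in Ico (0:ℝ) t₁, ENNReal.ofReal (S.l (S.traj x α t) (α t)))
        ≤ S.cost x α := by
      apply lintegral_mono_set
      intro t ht
      exact ⟨ht.1, ht₁exit t ht⟩
    have hstep4 : ENNReal.ofReal κ * volume (Ico (0:ℝ) t₁) ≤ ENNReal.ofReal (η/4) := by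
      rw [Real.volume_Ico, ← ENNReal.ofReal_mul hκ0]
      apply ENNReal.ofReal_le_ofReal
      have hκτ : κ * (t₁ - 0) ≤ κ * τ := by
        apply mul_le_mul_of_nonneg_left _ hκ0
        linarith
      have hε₁le : ε₁ ≤ η/(4 * Ll * (τ + 1)) := min_le_right _ _
      have hden : 0 < 4 * Ll * (τ + 1) := by positivity
      have hκle : κ ≤ Ll * (η/(4 * Ll * (τ + 1))) :=
        mul_le_mul_of_nonneg_left hε₁le hLl.le
      have h10 : Ll * (η/(4 * Ll * (τ + 1))) * τ ≤ η/4 := by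
        have hrw : Ll * (η/(4 * Ll * (τ + 1))) * τ = η * (Ll * τ) / (4 * Ll * (τ + 1)) := by
          ring
        rw [hrw, div_le_div_iff₀ hden (by norm_num : (0:ℝ) < 4)]
        have hexpand : η * (4 * Ll * (τ + 1)) = η * (Ll * τ) * 4 + 4 * (η * Ll) := by ring
        rw [hexpand]
        linarith [mul_nonneg hη.le hLl.le]
      calc κ * (t₁ - 0) ≤ κ * τ := hκτ
        _ ≤ Ll * (η/(4 * Ll * (τ + 1))) * τ := mul_le_mul_of_nonneg_right hκle hτ0
        _ ≤ η/4 := h10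
    calc (∫⁻ t in Ico (0:ℝ) t₁, ENNReal.ofReal (S.l (S.traj y α t) (α t)))
        ≤ _ := hstep1
      _ = _ := hstep2
      _ ≤ S.cost x α + ENNReal.ofReal (η/4) := add_le_add hstep3 hstep4
  have hsum : ENNReal.ofReal (η/4) + ENNReal.ofReal (η/4) + ENNReal.ofReal (η/2)
      = ENNReal.ofReal η := by
    rw [← ENNReal.ofReal_add (by linarith) (by linarith),
      ← ENNReal.ofReal_add (by linarith) (by linarith)]
    congr 1
    ring
  by_cases hzT : z ∈ S.T
  · -- the trajectory from y reaches the target by time t₁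
    have hexit_y : S.exitTime y α ≤ ENNReal.ofReal t₁ := S.exitTimeTo_le ht₁0 hzT
    have hAA : S.AsympAdm y α :=
      ⟨hαAdm, Or.inl (lt_of_le_of_lt hexit_y ENNReal.ofReal_lt_top)⟩
    have hsub : {t : ℝ | 0 ≤ t ∧ ENNReal.ofReal t < S.exitTime y α} ⊆ Ico 0 t₁ := by
      rintro t ⟨ht0, hte⟩
      refine ⟨ht0, ?_⟩
      by_contra hcon
      push_neg at hcon
      exact absurd (lt_of_lt_of_le hte hexit_y)
        (not_lt.mpr (ENNReal.ofReal_le_ofReal hcon))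
    calc S.V y ≤ S.cost y α := S.V_le hAA
      _ ≤ ∫⁻ t in Ico (0:ℝ) t₁, ENNReal.ofReal (S.l (S.traj y α t) (α t)) :=
          lintegral_mono_set hsub
      _ ≤ S.cost x α + ENNReal.ofReal (η/4) := hI1
      _ ≤ (S.V x + ENNReal.ofReal (η/4)) + ENNReal.ofReal (η/4) := add_le_add_left hαcost _
      _ ≤ S.V x + ENNReal.ofReal η := by
          rw [add_assoc]
          apply add_le_add_right
          rw [← ENNReal.ofReal_add (by linarith) (by linarith)]
          apply ENNReal.ofReal_le_ofReal
          linarith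
  · -- continue from z with a cheap control
    have hVz : S.V z ≤ ENNReal.ofReal (η/4) := hδ₀prop z hzT hzclose
    have hVzlt : S.V z < ENNReal.ofReal (η/2) :=
      lt_of_le_of_lt hVz ((ENNReal.ofReal_lt_ofReal_iff (by linarith)).mpr (by linarith))
    obtain ⟨β, hβAA, hβcost⟩ := S.exists_cost_lt hVzlt
    have h2 := (S.concat_traj hαAdm hβAA.1 y ht₁0).2
    have hAA : S.AsympAdm y (fun t => if t < t₁ then α t else β (t - t₁)) :=
      S.asympAdm_concat hαAdm y ht₁0 hβAA h2
    calc S.V y ≤ S.cost y (fun t => if t < t₁ then α t else β (t - t₁)) := S.V_le hAA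
      _ ≤ (∫⁻ t in Ico (0:ℝ) t₁, ENNReal.ofReal (S.l (S.traj y α t) (α t)))
          + S.cost z β := S.cost_concat_le hαAdm hβAA.1 y ht₁0
      _ ≤ (S.cost x α + ENNReal.ofReal (η/4)) + ENNReal.ofReal (η/2) :=
          add_le_add hI1 hβcost.le
      _ ≤ ((S.V x + ENNReal.ofReal (η/4)) + ENNReal.ofReal (η/4)) + ENNReal.ofReal (η/2) :=
          add_le_add_left (add_le_add_left hαcost _) _
      _ = S.V x + ENNReal.ofReal η := by
          rw [add_assoc, add_assoc, ← hsum, add_assoc]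
end ExitSetting

set_option maxHeartbeats 1000000 in
/-- If `𝒱` is continuous on `∂𝒯` and the turnpike condition (TPC) holds —
for all `R, η, δ > 0` there is an increasing `T : ℝ₊ → ℝ₊` such that every
`x ∈ Dom(𝒱)` with `δ ≤ dist(x,𝒯) ≤ R` admits a nearly optimal asymptotically
admissible control whose trajectory enters `𝒯_δ` within time `T(𝒱(x))` —
then `Dom(𝒱)` is open, `𝒱` is continuous on `Dom(𝒱)`, and `𝒱(x) → +∞` as
`x → x̄` for every `x̄ ∈ ∂ Dom(𝒱)` outside the target. -/
theorem stmt13 {n m : ℕ} (S : ExitSetting n m)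
    (hcont : ∀ η > (0:ℝ), ∃ δ > (0:ℝ), ∀ x ∉ S.T,
      infDist x S.T < δ → S.V x ≤ ENNReal.ofReal η)
    (hTPC : ∀ R > (0:ℝ), ∀ η > (0:ℝ), ∀ δ > (0:ℝ), ∃ Tfn : ℝ → ℝ,
      Monotone Tfn ∧
      ∀ x ∉ S.T, S.V x < ⊤ → δ ≤ infDist x S.T → infDist x S.T ≤ R →
        ∃ α, S.AsympAdm x α ∧ S.cost x α ≤ S.V x + ENNReal.ofReal η ∧
          ∃ t ∈ Set.Icc (0:ℝ) (Tfn (S.V x).toReal),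
            S.traj x α t ∈ Metric.cthickening δ S.T) :
    IsOpen {x | x ∉ S.T ∧ S.V x < ⊤} ∧
    ContinuousOn S.V {x | x ∉ S.T ∧ S.V x < ⊤} ∧
    (∀ x₀ ∈ frontier {x | x ∉ S.T ∧ S.V x < ⊤}, x₀ ∉ S.T →
      Tendsto S.V (nhdsWithin x₀ {x | x ∉ S.T ∧ S.V x < ⊤}) (nhds ⊤)) := by
  classical
  rcases eq_empty_or_nonempty S.T with hTe | hTne
  · -- degenerate case: empty target, `𝒱 ≡ 0`
    have hV0 : ∀ x, S.V x = 0 := by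
      intro x
      have hle : ∀ ε : ℝ, 0 < ε → S.V x ≤ ENNReal.ofReal ε := by
        intro ε hε
        obtain ⟨δ, hδ, hprop⟩ := hcont ε hε
        apply hprop x (by simp [hTe])
        rw [hTe, Metric.infDist_empty]
        exact hδ
      refine le_antisymm ?_ zero_le
      refine ENNReal.le_of_forall_pos_le_add ?_
      intro ε hε _
      calc S.V x ≤ ENNReal.ofReal ε := hle ε (by exact_mod_cast hε)
        _ ≤ 0 + (ε : ℝ≥0∞) := by simp [ENNReal.ofReal_coe_nnreal]
    have hDuniv : {x : Pt n | x ∉ S.T ∧ S.V x < ⊤} = univ := by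
      ext x
      simp [hTe, hV0 x]
    refine ⟨by rw [hDuniv]; exact isOpen_univ, ?_, ?_⟩
    · exact (continuousOn_const (c := (0:ℝ≥0∞))).congr (fun x _ => hV0 x)
    · intro x₀ hx₀ _
      rw [hDuniv, frontier_univ] at hx₀
      exact absurd hx₀ (notMem_empty x₀)
  · set D : Set (Pt n) := {x | x ∉ S.T ∧ S.V x < ⊤} with hDdef
    have hOpen : IsOpen D := by
      rw [Metric.isOpen_iff]
      intro p hp
      have hpT : p ∉ S.T := hp.1
      have hd₀ : 0 < infDist p S.T := (S.hTclosed.notMem_iff_infDist_pos hTne).mp hpT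
      have hVp : S.V p ≤ ENNReal.ofReal (S.V p).toReal := by
        rw [ENNReal.ofReal_toReal hp.2.ne]
      obtain ⟨r, hr, hprop⟩ :=
        S.keyU hTne hcont hTPC hpT one_pos (K := (S.V p).toReal) ENNReal.toReal_nonneg
      refine ⟨min r (infDist p S.T / 2), by positivity, ?_⟩
      intro q hq
      rw [Metric.mem_ball] at hq
      have hq1 : dist q p ≤ r := le_of_lt (lt_of_lt_of_le hq (min_le_left _ _))
      have hq2 : dist q p < infDist p S.T / 2 := lt_of_lt_of_le hq (min_le_right _ _)
      have hVq : S.V q ≤ S.V p + ENNReal.ofReal 1 :=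
        hprop p q (by simp [hr.le]) hq1 hVp
      constructor
      · intro hmem
        have h1 : infDist p S.T ≤ infDist q S.T + dist p q := infDist_le_infDist_add_dist
        rw [infDist_zero_of_mem hmem, dist_comm] at h1
        linarith
      · exact lt_of_le_of_lt hVq (ENNReal.add_lt_top.mpr ⟨hp.2, ENNReal.ofReal_lt_top⟩)
    refine ⟨hOpen, ?_, ?_⟩
    · -- continuity on D
      intro p hp
      apply ContinuousAt.continuousWithinAt
      have hpT : p ∉ S.T := hp.1
      have hd₀ : 0 < infDist p S.T := (S.hTclosed.notMem_iff_infDist_pos hTne).mp hpT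
      rw [ContinuousAt, ENNReal.tendsto_nhds hp.2.ne]
      intro ε hε
      obtain ⟨η, hη, hηε⟩ : ∃ η : ℝ, 0 < η ∧ ENNReal.ofReal η ≤ ε := by
        rcases eq_or_ne ε ⊤ with he | hne
        · exact ⟨1, one_pos, by rw [he]; exact le_top⟩
        · exact ⟨ε.toReal, ENNReal.toReal_pos hε.ne' hne,
            by rw [ENNReal.ofReal_toReal hne]⟩
      set K : ℝ := (S.V p).toReal + η with hKdef
      have hK : 0 ≤ K := by positivity
      obtain ⟨r, hr, hprop⟩ := S.keyU hTne hcont hTPC hpT hη (K := K) hK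
      have hball : Metric.ball p (min r (infDist p S.T / 2)) ∈ nhds p :=
        Metric.ball_mem_nhds p (by positivity)
      filter_upwards [hball] with q hq
      rw [Metric.mem_ball] at hq
      have hqr : dist q p ≤ r := le_of_lt (lt_of_lt_of_le hq (min_le_left _ _))
      have hq2 : dist q p < infDist p S.T / 2 := lt_of_lt_of_le hq (min_le_right _ _)
      have hVpeq : S.V p = ENNReal.ofReal ((S.V p).toReal) :=
        (ENNReal.ofReal_toReal hp.2.ne).symm
      have hVpK : S.V p ≤ ENNReal.ofReal K := by
        rw [hVpeq]
        exact ENNReal.ofReal_le_ofReal (by rw [hKdef]; linarith)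
      have h1 : S.V q ≤ S.V p + ENNReal.ofReal η :=
        hprop p q (by simp [hr.le]) hqr hVpK
      have hVqK : S.V q ≤ ENNReal.ofReal K := by
        calc S.V q ≤ S.V p + ENNReal.ofReal η := h1
          _ = ENNReal.ofReal ((S.V p).toReal) + ENNReal.ofReal η := by rw [← hVpeq]
          _ = ENNReal.ofReal K := by
              rw [← ENNReal.ofReal_add ENNReal.toReal_nonneg hη.le]
      have h2 : S.V p ≤ S.V q + ENNReal.ofReal η :=
        hprop q p hqr (by simp [hr.le]) hVqK
      constructor
      · rw [tsub_le_iff_right]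
        exact h2.trans (add_le_add_right hηε _)
      · exact h1.trans (add_le_add_right hηε _)
    · -- blow-up at the boundary of the domain
      intro p hpfr hpT
      by_contra hcon
      have hnot : ¬ ∀ (nn : ℕ), ∀ᶠ q in nhdsWithin p D, (nn : ℝ≥0∞) < S.V q :=
        fun h => hcon (ENNReal.tendsto_nhds_top h)
      rw [not_forall] at hnot
      obtain ⟨nn, hn⟩ := hnot
      rw [Filter.not_eventually] at hn
      obtain ⟨r, hr, hprop⟩ :=
        S.keyU hTne hcont hTPC hpT one_pos (K := (nn : ℝ)) (Nat.cast_nonneg nn)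
      have h1 : ∀ᶠ q in nhdsWithin p D, dist q p < r := by
        filter_upwards [mem_nhdsWithin_of_mem_nhds (Metric.ball_mem_nhds p hr)] with q hq
        exact Metric.mem_ball.mp hq
      have h2 : ∀ᶠ q in nhdsWithin p D, q ∈ D := by
        filter_upwards [self_mem_nhdsWithin] with q hq
        exact hq
      obtain ⟨q, hqV, hqr, hqD⟩ := (hn.and_eventually (h1.and h2)).exists
      have hVq : S.V q ≤ (nn : ℝ≥0∞) := not_lt.mp hqV
      have hVqK : S.V q ≤ ENNReal.ofReal (nn : ℝ) := by
        rwa [ENNReal.ofReal_natCast]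
      have hVp : S.V p ≤ S.V q + ENNReal.ofReal 1 :=
        hprop q p hqr.le (by simp [hr.le]) hVqK
      have hpD : p ∈ D := by
        refine ⟨hpT, lt_of_le_of_lt hVp (ENNReal.add_lt_top.mpr ⟨?_, ENNReal.ofReal_lt_top⟩)⟩
        exact lt_of_le_of_lt hVq (ENNReal.natCast_lt_top nn)
      rw [hOpen.frontier_eq] at hpfr
      exact hpfr.2 hpD
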